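/- Fix m, l, g > 0, I₁, I₃ > 0, set 𝕀 = diag(I₁, I₁, I₃) and χ = e₃ = (0,0,1), and let ρ ∈ ℝ satisfy 0 < ρ < m² l²/I₁. Then for every Ω₃⁰ ∈ ℝ the upright-spinning equilibrium x_e = (Ω, v, Γ) = (Ω₃⁰ e₃, 0, e₃) of the closed-loop Euler–Poincaré system is Lyapunov stable: for every ε > 0 there exists δ > 0 such that every solution (Ω, v, Γ) : ℝ → ℝ³ × ℝ³ × ℝ³ of the closed-loop Euler–Poincaré system with ‖(Ω(0), v(0), Γ(0)) − x_e‖ < δ satisfies ‖(Ω(t), v(t), Γ(t)) − x_e‖ < ε for all t ≥ 0. -/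

import Mathlib

set_option maxHeartbeats 1000000


open Matrix

/-- The closed-loop Euler–Poincaré system: with `μ = 𝕀Ω + m l (χ × v)` and
`p = ρ v + m l (Ω × χ)`, the curves satisfy
`μ' = μ × Ω + p × v − m g l (χ × Γ)`, `p' = p × Ω`, `Γ' = Γ × Ω`. -/
def ClosedLoopEP (m l g ρ : ℝ) (χ : Fin 3 → ℝ) (I : Matrix (Fin 3) (Fin 3) ℝ)
    (Ω v Γ : ℝ → Fin 3 → ℝ) : Prop :=
  Differentiable ℝ Ω ∧ Differentiable ℝ v ∧ Differentiable ℝ Γ ∧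
  (∀ t, deriv (fun s => I *ᵥ Ω s + (m * l) • (χ ⨯₃ v s)) t
      = (I *ᵥ Ω t + (m * l) • (χ ⨯₃ v t)) ⨯₃ Ω t
        + (ρ • v t + (m * l) • (Ω t ⨯₃ χ)) ⨯₃ v t - (m * g * l) • (χ ⨯₃ Γ t)) ∧
  (∀ t, deriv (fun s => ρ • v s + (m * l) • (Ω s ⨯₃ χ)) t
      = (ρ • v t + (m * l) • (Ω t ⨯₃ χ)) ⨯₃ Ω t) ∧
  (∀ t, deriv Γ t = Γ t ⨯₃ Ω t)

/-- A (rescaled) energy–Casimir Lyapunov function for the upright equilibrium. -/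
noncomputable def heavyTopV (m l g ρ I₁ I₃ Ω₃0 : ℝ) (Ω v Γ : ℝ → Fin 3 → ℝ) : ℝ → ℝ :=
  fun t => ((m*l)^2 - I₁*ρ)/2*((Ω t 0)^2 + (Ω t 1)^2) + ρ*I₃/2*(Ω t 2 - Ω₃0)^2
    + (ρ/2)*((ρ*v t 0 + m*l*Ω t 1)^2 + (ρ*v t 1 - m*l*Ω t 0)^2 + (ρ*v t 2)^2)
    + (ρ*m*g*l/2)*((Γ t 0)^2 + (Γ t 1)^2 + (Γ t 2 - 1)^2)

lemma heavyTopV_hasDerivAt_zero (m l g ρ I₁ I₃ Ω₃0 : ℝ)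
    (Ω v Γ : ℝ → Fin 3 → ℝ)
    (h : ClosedLoopEP m l g ρ ![(0 : ℝ), 0, 1] (Matrix.diagonal ![I₁, I₁, I₃]) Ω v Γ)
    (t : ℝ) :
    HasDerivAt (heavyTopV m l g ρ I₁ I₃ Ω₃0 Ω v Γ) 0 t := by
  obtain ⟨hΩ, hv, hΓ, hμ, hp, hΓ'⟩ := h
  have hΩ' : ∀ i, HasDerivAt (fun s => Ω s i) (deriv Ω t i) t :=
    hasDerivAt_pi.mp (hΩ t).hasDerivAt
  have hv' : ∀ i, HasDerivAt (fun s => v s i) (deriv v t i) t :=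
    hasDerivAt_pi.mp (hv t).hasDerivAt
  set ω' := deriv Ω t with hω'
  set u' := deriv v t with hu'
  set γ' := deriv Γ t with hγ'
  -- the μ-curve equations
  have hF : HasDerivAt (fun s => (Matrix.diagonal ![I₁, I₁, I₃]) *ᵥ Ω s
        + (m * l) • (![(0:ℝ),0,1] ⨯₃ v s))
      (![I₁ * ω' 0 - m*l* u' 1, I₁ * ω' 1 + m*l* u' 0, I₃ * ω' 2]) t := by
    rw [hasDerivAt_pi]
    intro i
    fin_cases i
    · have base : HasDerivAt (fun s => I₁ * Ω s 0 - m*l* v s 1) (I₁ * ω' 0 - m*l* u' 1) t :=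
        ((hΩ' 0).const_mul I₁).sub ((hv' 1).const_mul (m*l))
      refine base.congr_of_eventuallyEq (Filter.Eventually.of_forall fun s => ?_)
        |>.congr_deriv ?_
      · simp [cross_apply, Matrix.mulVec_diagonal]
        try ring
      · simp
    · have base : HasDerivAt (fun s => I₁ * Ω s 1 + m*l* v s 0) (I₁ * ω' 1 + m*l* u' 0) t :=
        ((hΩ' 1).const_mul I₁).add ((hv' 0).const_mul (m*l))
      refine base.congr_of_eventuallyEq (Filter.Eventually.of_forall fun s => ?_)
        |>.congr_deriv ?_
      · simp [cross_apply, Matrix.mulVec_diagonal]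
        try ring
      · simp
    · have base : HasDerivAt (fun s => I₃ * Ω s 2) (I₃ * ω' 2) t :=
        (hΩ' 2).const_mul I₃
      refine base.congr_of_eventuallyEq (Filter.Eventually.of_forall fun s => ?_)
        |>.congr_deriv ?_
      · simp [cross_apply, Matrix.mulVec_diagonal]
        try ring
      · simp
  have hWμ := (hF.deriv).symm.trans (hμ t)
  have e10 := congrFun hWμ 0
  have e11 := congrFun hWμ 1
  have e12 := congrFun hWμ 2
  simp [cross_apply, Matrix.mulVec_diagonal, Matrix.vecHead, Matrix.vecTail,
    Function.comp] at e10 e11 e12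
  -- the p-curve equations
  have hG : HasDerivAt (fun s => ρ • v s + (m * l) • (Ω s ⨯₃ ![(0:ℝ),0,1]))
      (![ρ * u' 0 + m*l* ω' 1, ρ * u' 1 - m*l* ω' 0, ρ * u' 2]) t := by
    rw [hasDerivAt_pi]
    intro i
    fin_cases i
    · have base : HasDerivAt (fun s => ρ * v s 0 + m*l* Ω s 1) (ρ * u' 0 + m*l* ω' 1) t :=
        ((hv' 0).const_mul ρ).add ((hΩ' 1).const_mul (m*l))
      refine base.congr_of_eventuallyEq (Filter.Eventually.of_forall fun s => ?_)
        |>.congr_deriv ?_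
      · simp [cross_apply]
        try ring
      · simp
    · have base : HasDerivAt (fun s => ρ * v s 1 - m*l* Ω s 0) (ρ * u' 1 - m*l* ω' 0) t :=
        ((hv' 1).const_mul ρ).sub ((hΩ' 0).const_mul (m*l))
      refine base.congr_of_eventuallyEq (Filter.Eventually.of_forall fun s => ?_)
        |>.congr_deriv ?_
      · simp [cross_apply]
        try ring
      · simp
    · have base : HasDerivAt (fun s => ρ * v s 2) (ρ * u' 2) t :=
        (hv' 2).const_mul ρ
      refine base.congr_of_eventuallyEq (Filter.Eventually.of_forall fun s => ?_)
        |>.congr_deriv ?_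
      · simp [cross_apply]
        try ring
      · simp
  have hWp := (hG.deriv).symm.trans (hp t)
  have e20 := congrFun hWp 0
  have e21 := congrFun hWp 1
  have e22 := congrFun hWp 2
  simp [cross_apply, Matrix.vecHead, Matrix.vecTail, Function.comp] at e20 e21 e22
  -- the Γ equations
  have e30 := congrFun (hΓ' t) 0
  have e31 := congrFun (hΓ' t) 1
  have e32 := congrFun (hΓ' t) 2
  simp [cross_apply, Matrix.vecHead, Matrix.vecTail, Function.comp, ← hγ'] at e30 e31 e32
  -- assemble the derivative of V
  have d1 : HasDerivAt (fun s => ((m*l)^2 - I₁*ρ)/2*((Ω s 0)^2 + (Ω s 1)^2))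
      (((m*l)^2 - I₁*ρ)/2*(2*Ω t 0*ω' 0 + 2*Ω t 1*ω' 1)) t := by
    have := (((hΩ' 0).pow 2).add ((hΩ' 1).pow 2)).const_mul (((m*l)^2 - I₁*ρ)/2)
    refine this.congr_deriv ?_
    push_cast; ring
  have d2 : HasDerivAt (fun s => ρ*I₃/2*(Ω s 2 - Ω₃0)^2) (ρ*I₃/2*(2*(Ω t 2 - Ω₃0)*ω' 2)) t := by
    have := (((hΩ' 2).sub_const Ω₃0).pow 2).const_mul (ρ*I₃/2)
    refine this.congr_deriv ?_
    push_cast; ring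
  have d3 : HasDerivAt (fun s => (ρ/2)*((ρ*v s 0 + m*l*Ω s 1)^2 + (ρ*v s 1 - m*l*Ω s 0)^2
        + (ρ*v s 2)^2))
      ((ρ/2)*(2*(ρ*v t 0 + m*l*Ω t 1)*(ρ*u' 0 + m*l*ω' 1)
        + 2*(ρ*v t 1 - m*l*Ω t 0)*(ρ*u' 1 - m*l*ω' 0) + 2*(ρ*v t 2)*(ρ*u' 2))) t := by
    have b1 : HasDerivAt (fun s => ρ*v s 0 + m*l*Ω s 1) (ρ*u' 0 + m*l*ω' 1) t :=
      ((hv' 0).const_mul ρ).add ((hΩ' 1).const_mul (m*l))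
    have b2 : HasDerivAt (fun s => ρ*v s 1 - m*l*Ω s 0) (ρ*u' 1 - m*l*ω' 0) t :=
      ((hv' 1).const_mul ρ).sub ((hΩ' 0).const_mul (m*l))
    have b3 : HasDerivAt (fun s => ρ*v s 2) (ρ*u' 2) t := (hv' 2).const_mul ρ
    have := (((b1.pow 2).add (b2.pow 2)).add (b3.pow 2)).const_mul (ρ/2)
    refine this.congr_deriv ?_
    push_cast; ring
  have d4 : HasDerivAt (fun s => (ρ*m*g*l/2)*((Γ s 0)^2 + (Γ s 1)^2 + (Γ s 2 - 1)^2))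
      ((ρ*m*g*l/2)*(2*Γ t 0*γ' 0 + 2*Γ t 1*γ' 1 + 2*(Γ t 2 - 1)*γ' 2)) t := by
    have hΓ'' : ∀ i, HasDerivAt (fun s => Γ s i) (γ' i) t :=
      hasDerivAt_pi.mp (hΓ t).hasDerivAt
    have := ((((hΓ'' 0).pow 2).add ((hΓ'' 1).pow 2)).add
      (((hΓ'' 2).sub_const 1).pow 2)).const_mul (ρ*m*g*l/2)
    refine this.congr_deriv ?_
    push_cast; ring
  have hV := ((d1.add d2).add d3).add d4
  refine hV.congr_deriv ?_
  linear_combination (-(ρ*Ω t 0)) * e10 + (-(ρ*Ω t 1)) * e11 + ρ*(Ω t 2 - Ω₃0) * e12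
    + (m*l*Ω t 1 + ρ*(ρ*v t 0 + m*l*Ω t 1)) * e20
    + (-(m*l*Ω t 0) + ρ*(ρ*v t 1 - m*l*Ω t 0)) * e21
    + (ρ*ρ*v t 2) * e22
    + (ρ*m*g*l*Γ t 0) * e30 + (ρ*m*g*l*Γ t 1) * e31 + (ρ*m*g*l*(Γ t 2 - 1)) * e32

lemma heavyTopV_const (m l g ρ I₁ I₃ Ω₃0 : ℝ)
    (Ω v Γ : ℝ → Fin 3 → ℝ)
    (h : ClosedLoopEP m l g ρ ![(0 : ℝ), 0, 1] (Matrix.diagonal ![I₁, I₁, I₃]) Ω v Γ)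
    (t : ℝ) :
    heavyTopV m l g ρ I₁ I₃ Ω₃0 Ω v Γ t = heavyTopV m l g ρ I₁ I₃ Ω₃0 Ω v Γ 0 :=
  is_const_of_deriv_eq_zero
    (fun s => (heavyTopV_hasDerivAt_zero m l g ρ I₁ I₃ Ω₃0 Ω v Γ h s).differentiableAt)
    (fun s => (heavyTopV_hasDerivAt_zero m l g ρ I₁ I₃ Ω₃0 Ω v Γ h s).deriv) t 0

/-- positive-definite 2×2 block inequality -/
lemma block_ineq (C ρ L : ℝ) (hC : 0 < C) (hρ : 0 < ρ) (hL : 0 < L) (ω u : ℝ) :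
    C*ρ^2/(2*C + L^2 + ρ^2) * (ω^2 + u^2) ≤ C*ω^2 + (1/2)*(ρ*u + L*ω)^2 := by
  have hT : (0:ℝ) < 2*C + L^2 + ρ^2 := by positivity
  rw [div_mul_eq_mul_div, div_le_iff₀ hT]
  nlinarith [sq_nonneg ((2*C + L^2 + ρ^2)*ρ*L/2*ω + ρ^2*(L^2+ρ^2)/2*u),
    sq_nonneg (C*ρ^2*ω),
    mul_pos (mul_pos hρ hρ) (by positivity : (0:ℝ) < (L^2+ρ^2)/2)]

lemma lower_aux (C ρ L I₃ G c0 : ℝ) (hC : 0 < C) (hρ : 0 < ρ) (hL : 0 < L)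
    (hc1 : c0 ≤ C*ρ^2/(2*C + L^2 + ρ^2)) (hc2 : c0 ≤ I₃/2) (hc3 : c0 ≤ ρ^2/2)
    (hc4 : c0 ≤ G/2) (w0 w1 w2 x0 x1 x2 y0 y1 y2 : ℝ) :
    c0*(w0^2 + w1^2 + w2^2 + (x0^2 + x1^2 + x2^2) + (y0^2 + y1^2 + y2^2))
      ≤ C*(w0^2 + w1^2) + I₃/2*w2^2
        + (1/2)*((ρ*x0 + L*w1)^2 + (ρ*x1 - L*w0)^2 + (ρ*x2)^2)
        + (G/2)*(y0^2 + y1^2 + y2^2) := by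
  have hb1 := block_ineq C ρ L hC hρ hL w1 x0
  have hb2 := block_ineq C ρ L hC hρ hL (-w0) x1
  have e2 : C*(-w0)^2 + (1/2)*(ρ*x1 + L*(-w0))^2 = C*w0^2 + (1/2)*(ρ*x1 - L*w0)^2 := by
    ring
  rw [e2] at hb2
  have hA1 : c0*(w1^2 + x0^2) ≤ C*w1^2 + (1/2)*(ρ*x0 + L*w1)^2 := by
    refine le_trans ?_ hb1
    exact mul_le_mul_of_nonneg_right hc1 (by positivity)
  have hA2 : c0*(w0^2 + x1^2) ≤ C*w0^2 + (1/2)*(ρ*x1 - L*w0)^2 := by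
    have h' : c0*((-w0)^2 + x1^2) ≤ C*w0^2 + (1/2)*(ρ*x1 - L*w0)^2 :=
      le_trans (mul_le_mul_of_nonneg_right hc1 (by positivity)) hb2
    calc c0*(w0^2 + x1^2) = c0*((-w0)^2 + x1^2) := by ring
      _ ≤ _ := h'
  have hA3 : c0*w2^2 ≤ I₃/2*w2^2 := mul_le_mul_of_nonneg_right hc2 (sq_nonneg _)
  have hA4 : c0*x2^2 ≤ ρ^2/2*x2^2 := mul_le_mul_of_nonneg_right hc3 (sq_nonneg _)
  have hA5 : c0*(y0^2 + y1^2 + y2^2) ≤ G/2*(y0^2 + y1^2 + y2^2) :=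
    mul_le_mul_of_nonneg_right hc4 (by positivity)
  have e4 : ρ^2/2*x2^2 = (1/2)*(ρ*x2)^2 := by ring
  rw [e4] at hA4
  linarith

lemma upper_aux (C ρ L I₃ G : ℝ) (hC : 0 < C) (hρ : 0 < ρ) (hL : 0 < L) (hI₃ : 0 < I₃)
    (hG : 0 < G) (w0 w1 w2 x0 x1 x2 y0 y1 y2 : ℝ) :
    C*(w0^2 + w1^2) + I₃/2*w2^2
        + (1/2)*((ρ*x0 + L*w1)^2 + (ρ*x1 - L*w0)^2 + (ρ*x2)^2)
        + (G/2)*(y0^2 + y1^2 + y2^2)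
      ≤ (C + I₃/2 + ρ^2 + L^2 + G/2)
        * (w0^2 + w1^2 + w2^2 + (x0^2 + x1^2 + x2^2) + (y0^2 + y1^2 + y2^2)) := by
  have h1 : w0^2 + w1^2 ≤ w0^2 + w1^2 + w2^2 + (x0^2 + x1^2 + x2^2)
      + (y0^2 + y1^2 + y2^2) := by
    linarith [sq_nonneg w2, sq_nonneg x0, sq_nonneg x1, sq_nonneg x2, sq_nonneg y0,
      sq_nonneg y1, sq_nonneg y2]
  have h2 : w2^2 ≤ w0^2 + w1^2 + w2^2 + (x0^2 + x1^2 + x2^2) + (y0^2 + y1^2 + y2^2) := by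
    linarith [sq_nonneg w0, sq_nonneg w1, sq_nonneg x0, sq_nonneg x1, sq_nonneg x2,
      sq_nonneg y0, sq_nonneg y1, sq_nonneg y2]
  have h4 : y0^2 + y1^2 + y2^2 ≤ w0^2 + w1^2 + w2^2 + (x0^2 + x1^2 + x2^2)
      + (y0^2 + y1^2 + y2^2) := by
    linarith [sq_nonneg w0, sq_nonneg w1, sq_nonneg w2, sq_nonneg x0, sq_nonneg x1,
      sq_nonneg x2]
  have hB1 := mul_le_mul_of_nonneg_left h1 hC.le
  have hB2 := mul_le_mul_of_nonneg_left h2 (by positivity : (0:ℝ) ≤ I₃/2)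
  have hB4 := mul_le_mul_of_nonneg_left h4 (by positivity : (0:ℝ) ≤ G/2)
  have hB3 : (1/2)*((ρ*x0 + L*w1)^2 + (ρ*x1 - L*w0)^2 + (ρ*x2)^2)
      ≤ (ρ^2 + L^2)*(w0^2 + w1^2 + w2^2 + (x0^2 + x1^2 + x2^2)
        + (y0^2 + y1^2 + y2^2)) := by
    have p1 : (ρ*x0 + L*w1)^2 ≤ 2*(ρ^2*x0^2 + L^2*w1^2) := by
      nlinarith [sq_nonneg (ρ*x0 - L*w1)]
    have p2 : (ρ*x1 - L*w0)^2 ≤ 2*(ρ^2*x1^2 + L^2*w0^2) := by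
      nlinarith [sq_nonneg (ρ*x1 + L*w0)]
    have p3 : (ρ*x2)^2 = ρ^2*x2^2 := by ring
    linarith [p1, p2, p3.le,
      mul_nonneg (sq_nonneg ρ) (sq_nonneg w0), mul_nonneg (sq_nonneg ρ) (sq_nonneg w1),
      mul_nonneg (sq_nonneg ρ) (sq_nonneg w2), mul_nonneg (sq_nonneg ρ) (sq_nonneg x2),
      mul_nonneg (sq_nonneg ρ) (sq_nonneg y0), mul_nonneg (sq_nonneg ρ) (sq_nonneg y1),
      mul_nonneg (sq_nonneg ρ) (sq_nonneg y2),
      mul_nonneg (sq_nonneg L) (sq_nonneg w2), mul_nonneg (sq_nonneg L) (sq_nonneg x0),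
      mul_nonneg (sq_nonneg L) (sq_nonneg x1), mul_nonneg (sq_nonneg L) (sq_nonneg x2),
      mul_nonneg (sq_nonneg L) (sq_nonneg y0), mul_nonneg (sq_nonneg L) (sq_nonneg y1),
      mul_nonneg (sq_nonneg L) (sq_nonneg y2)]
  calc C*(w0^2 + w1^2) + I₃/2*w2^2
        + (1/2)*((ρ*x0 + L*w1)^2 + (ρ*x1 - L*w0)^2 + (ρ*x2)^2)
        + (G/2)*(y0^2 + y1^2 + y2^2)
      ≤ C*(w0^2 + w1^2 + w2^2 + (x0^2 + x1^2 + x2^2) + (y0^2 + y1^2 + y2^2))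
        + I₃/2*(w0^2 + w1^2 + w2^2 + (x0^2 + x1^2 + x2^2) + (y0^2 + y1^2 + y2^2))
        + (ρ^2 + L^2)*(w0^2 + w1^2 + w2^2 + (x0^2 + x1^2 + x2^2) + (y0^2 + y1^2 + y2^2))
        + (G/2)*(w0^2 + w1^2 + w2^2 + (x0^2 + x1^2 + x2^2) + (y0^2 + y1^2 + y2^2)) := by
        linarith
    _ = (C + I₃/2 + ρ^2 + L^2 + G/2)
        * (w0^2 + w1^2 + w2^2 + (x0^2 + x1^2 + x2^2) + (y0^2 + y1^2 + y2^2)) := by ring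

/-- Lyapunov stability of the upright-spinning equilibrium `(Ω, v, Γ) = (Ω₃⁰e₃, 0, e₃)`
of the closed-loop Euler–Poincaré system for the Lagrange top
(`𝕀 = diag(I₁, I₁, I₃)`, `χ = e₃`), for any `0 < ρ < m²l²/I₁` and every spin rate
`Ω₃⁰ ∈ ℝ`.  The distance is the Euclidean norm on `ℝ⁹`. -/
theorem heavyTop_upright_stable (m l g ρ I₁ I₃ : ℝ)
    (hm : 0 < m) (hl : 0 < l) (hg : 0 < g) (hI₁ : 0 < I₁) (hI₃ : 0 < I₃)
    (hρ : 0 < ρ) (hρm : ρ < m ^ 2 * l ^ 2 / I₁) (Ω₃0 : ℝ) :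
    ∀ ε > (0 : ℝ), ∃ δ > (0 : ℝ),
      ∀ (Ω v Γ : ℝ → Fin 3 → ℝ),
        ClosedLoopEP m l g ρ ![(0 : ℝ), 0, 1] (Matrix.diagonal ![I₁, I₁, I₃]) Ω v Γ →
        Real.sqrt ((Ω 0 - Ω₃0 • ![(0 : ℝ), 0, 1]) ⬝ᵥ (Ω 0 - Ω₃0 • ![(0 : ℝ), 0, 1])
            + v 0 ⬝ᵥ v 0 + (Γ 0 - ![(0 : ℝ), 0, 1]) ⬝ᵥ (Γ 0 - ![(0 : ℝ), 0, 1])) < δ →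
        ∀ t ≥ (0 : ℝ),
          Real.sqrt ((Ω t - Ω₃0 • ![(0 : ℝ), 0, 1]) ⬝ᵥ (Ω t - Ω₃0 • ![(0 : ℝ), 0, 1])
            + v t ⬝ᵥ v t + (Γ t - ![(0 : ℝ), 0, 1]) ⬝ᵥ (Γ t - ![(0 : ℝ), 0, 1])) < ε := by
  intro ε hε
  set L : ℝ := m*l with hLdef
  have hL : 0 < L := mul_pos hm hl
  set C : ℝ := (L^2/ρ - I₁)/2 with hCdef
  have hC : 0 < C := by
    have h1 : ρ * I₁ < m^2*l^2 := by
      have := (lt_div_iff₀ hI₁).mp hρm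
      linarith
    have : I₁ < L^2/ρ := by
      rw [lt_div_iff₀ hρ, hLdef]
      nlinarith
    simp only [hCdef]
    linarith
  set cb : ℝ := C*ρ^2/(2*C + L^2 + ρ^2) with hcb
  have hcbpos : 0 < cb := by positivity
  set c0 : ℝ := min (min cb (I₃/2)) (min (ρ^2/2) (m*g*l/2)) with hc0def
  have hc0pos : 0 < c0 := by
    simp only [hc0def, lt_min_iff]
    refine ⟨⟨hcbpos, by positivity⟩, by positivity, by positivity⟩
  set K0 : ℝ := C + I₃/2 + ρ^2 + L^2 + m*g*l/2 with hK0def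
  have hK0pos : 0 < K0 := by positivity
  set c : ℝ := ρ * c0 with hcdef
  set K : ℝ := ρ * K0 with hKdef
  have hcpos : 0 < c := mul_pos hρ hc0pos
  have hKpos : 0 < K := mul_pos hρ hK0pos
  refine ⟨ε * Real.sqrt (c/K), by positivity, ?_⟩
  intro Ω v Γ hEP h0 t ht
  set S : ℝ → ℝ := fun s => (Ω s - Ω₃0 • ![(0 : ℝ), 0, 1]) ⬝ᵥ (Ω s - Ω₃0 • ![(0 : ℝ), 0, 1])
      + v s ⬝ᵥ v s + (Γ s - ![(0 : ℝ), 0, 1]) ⬝ᵥ (Γ s - ![(0 : ℝ), 0, 1]) with hSdef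
  have hSeq : ∀ s, S s = (Ω s 0)^2 + (Ω s 1)^2 + (Ω s 2 - Ω₃0)^2
      + ((v s 0)^2 + (v s 1)^2 + (v s 2)^2)
      + ((Γ s 0)^2 + (Γ s 1)^2 + (Γ s 2 - 1)^2) := by
    intro s
    simp only [hSdef, dotProduct, Fin.sum_univ_three, Pi.sub_apply, Pi.smul_apply,
      smul_eq_mul, Matrix.cons_val_zero, Matrix.cons_val_one, Matrix.head_cons,
      Matrix.cons_val_two, Matrix.tail_cons]
    ring
  have hSnonneg : ∀ s, 0 ≤ S s := by
    intro s; rw [hSeq s]; positivity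
  have hVexp : ∀ s, heavyTopV m l g ρ I₁ I₃ Ω₃0 Ω v Γ s
      = ρ * (C*((Ω s 0)^2 + (Ω s 1)^2) + I₃/2*(Ω s 2 - Ω₃0)^2
        + (1/2)*((ρ*v s 0 + L*Ω s 1)^2 + (ρ*v s 1 - L*Ω s 0)^2 + (ρ*v s 2)^2)
        + (m*g*l/2)*((Γ s 0)^2 + (Γ s 1)^2 + (Γ s 2 - 1)^2)) := by
    intro s
    simp only [heavyTopV, hCdef, hLdef]
    field_simp
  -- lower bound : c * S ≤ V
  have hlower : ∀ s, c * S s ≤ heavyTopV m l g ρ I₁ I₃ Ω₃0 Ω v Γ s := by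
    intro s
    have h1 : c0 ≤ cb := le_trans (min_le_left _ _) (min_le_left _ _)
    have h2 : c0 ≤ I₃/2 := le_trans (min_le_left _ _) (min_le_right _ _)
    have h3 : c0 ≤ ρ^2/2 := le_trans (min_le_right _ _) (min_le_left _ _)
    have h4 : c0 ≤ m*g*l/2 := le_trans (min_le_right _ _) (min_le_right _ _)
    have h' := mul_le_mul_of_nonneg_left
      (lower_aux C ρ L I₃ (m*g*l) c0 hC hρ hL (hcb ▸ h1) h2 h3 h4
        (Ω s 0) (Ω s 1) (Ω s 2 - Ω₃0) (v s 0) (v s 1) (v s 2)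
        (Γ s 0) (Γ s 1) (Γ s 2 - 1)) hρ.le
    rw [hVexp s]
    calc c * S s = ρ * (c0*((Ω s 0)^2 + (Ω s 1)^2 + (Ω s 2 - Ω₃0)^2
          + ((v s 0)^2 + (v s 1)^2 + (v s 2)^2)
          + ((Γ s 0)^2 + (Γ s 1)^2 + (Γ s 2 - 1)^2))) := by
          rw [hSeq s, hcdef]; ring
      _ ≤ _ := h'
  -- upper bound : V ≤ K * S
  have hupper : ∀ s, heavyTopV m l g ρ I₁ I₃ Ω₃0 Ω v Γ s ≤ K * S s := by
    intro s
    have h' := mul_le_mul_of_nonneg_left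
      (upper_aux C ρ L I₃ (m*g*l) hC hρ hL hI₃ (by positivity)
        (Ω s 0) (Ω s 1) (Ω s 2 - Ω₃0) (v s 0) (v s 1) (v s 2)
        (Γ s 0) (Γ s 1) (Γ s 2 - 1)) hρ.le
    rw [hVexp s]
    calc ρ * (C*((Ω s 0)^2 + (Ω s 1)^2) + I₃/2*(Ω s 2 - Ω₃0)^2
          + (1/2)*((ρ*v s 0 + L*Ω s 1)^2 + (ρ*v s 1 - L*Ω s 0)^2 + (ρ*v s 2)^2)
          + (m*g*l/2)*((Γ s 0)^2 + (Γ s 1)^2 + (Γ s 2 - 1)^2))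
        ≤ ρ * ((C + I₃/2 + ρ^2 + L^2 + m*g*l/2)
          * ((Ω s 0)^2 + (Ω s 1)^2 + (Ω s 2 - Ω₃0)^2
            + ((v s 0)^2 + (v s 1)^2 + (v s 2)^2)
            + ((Γ s 0)^2 + (Γ s 1)^2 + (Γ s 2 - 1)^2))) := h'
      _ = K * S s := by rw [hSeq s, hKdef, hK0def]; ring
  -- conservation
  have hcons := heavyTopV_const m l g ρ I₁ I₃ Ω₃0 Ω v Γ hEP t
  -- initial smallness
  have hδ : Real.sqrt (S 0) < ε * Real.sqrt (c/K) := h0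
  have hS0 : S 0 < ε^2 * (c/K) := by
    have h1 : Real.sqrt (S 0) ^ 2 < (ε * Real.sqrt (c/K))^2 := by
      have := Real.sqrt_nonneg (S 0)
      nlinarith
    rw [Real.sq_sqrt (hSnonneg 0)] at h1
    calc S 0 < (ε * Real.sqrt (c/K))^2 := h1
      _ = ε^2 * (Real.sqrt (c/K))^2 := by ring
      _ = ε^2 * (c/K) := by rw [Real.sq_sqrt (by positivity : (0:ℝ) ≤ c/K)]
  have hV0 : heavyTopV m l g ρ I₁ I₃ Ω₃0 Ω v Γ 0 < c * ε^2 := by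
    calc heavyTopV m l g ρ I₁ I₃ Ω₃0 Ω v Γ 0 ≤ K * S 0 := hupper 0
      _ < K * (ε^2 * (c/K)) := by
          exact mul_lt_mul_of_pos_left hS0 hKpos
      _ = c * ε^2 := by field_simp
  have hSt : S t < ε^2 := by
    have h1 : c * S t ≤ heavyTopV m l g ρ I₁ I₃ Ω₃0 Ω v Γ t := hlower t
    rw [hcons] at h1
    have h2 : c * S t < c * ε^2 := lt_of_le_of_lt h1 hV0
    exact lt_of_mul_lt_mul_left h2 hcpos.le
  calc Real.sqrt (S t) < Real.sqrt (ε^2) := Real.sqrt_lt_sqrt (hSnonneg t) hSt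
    _ = ε := by rw [Real.sqrt_sq hε.le]
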